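/- Let n, s, t ≥ 1 be integers with s ≤ n, let p be a prime with p ≥ 2n², and let F be a field of characteristic p. Let S = { x ∈ {−1, 1}^n : |Σ_{j=1}^n x_j| ≤ n/s }. Suppose there exist vectors x^1, …, x^t ∈ S and coefficients c_1, …, c_t ∈ F such that the all-ones vector 1^n equals Σ_{i=1}^t c_i · x^i in F^n, where entries of the x^i are viewed in F via the canonical ring map ℤ → F. Then (t+1)! ≥ s. -/

import Mathlib

open Finset


lemma abs_det_le_factorial {r : ℕ} (M : Matrix (Fin r) (Fin r) ℤ)
    (h : ∀ i j, |M i j| ≤ 1) : |M.det| ≤ (r.factorial : ℤ) := by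
  rw [Matrix.det_apply]
  calc |∑ σ : Equiv.Perm (Fin r), Equiv.Perm.sign σ • ∏ i, M (σ i) i|
      ≤ ∑ σ : Equiv.Perm (Fin r), |Equiv.Perm.sign σ • ∏ i, M (σ i) i| :=
        Finset.abs_sum_le_sum_abs _ _
    _ ≤ ∑ _σ : Equiv.Perm (Fin r), 1 := by
        apply Finset.sum_le_sum
        intro σ _
        have h1 : |((Equiv.Perm.sign σ : ℤˣ) : ℤ)| = 1 := by
          rcases Int.units_eq_one_or (Equiv.Perm.sign σ) with h' | h' <;> rw [h'] <;> simp
        rw [Units.smul_def, smul_eq_mul, abs_mul, h1, one_mul, abs_prod]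
        calc ∏ i, |M (σ i) i| ≤ ∏ _i : Fin r, (1:ℤ) :=
              Finset.prod_le_prod (fun i _ => abs_nonneg _) (fun i _ => h _ _)
          _ = 1 := by simp
    _ = (r.factorial : ℤ) := by
        simp [Finset.card_univ, Fintype.card_perm, Fintype.card_fin]



lemma exists_invertible_minor {m r : ℕ} (G : Fin r → (Fin m → ℚ))
    (hG : LinearIndependent ℚ G) :
    ∃ τ : Fin r → Fin m, Function.Injective τ ∧
      (Matrix.of fun k s => G k (τ s)).det ≠ 0 := by
  classical
  set L : Submodule ℚ (Fin m → ℚ) := Submodule.span ℚ (Set.range G) with hL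
  let f : Fin m → Module.Dual ℚ L := fun l => (LinearMap.proj l).comp L.subtype
  have hfspan : Submodule.span ℚ (Set.range f) = ⊤ := by
    rw [Submodule.eq_top_iff']
    intro φ
    obtain ⟨ψ, hψ⟩ := LinearMap.dualMap_surjective_of_injective L.injective_subtype φ
    have key : φ = ∑ l, ψ ((Pi.single l 1 : Fin m → ℚ)) • f l := by
      ext v
      have hv : (v : Fin m → ℚ) = ∑ l, ((v : Fin m → ℚ) l) • (Pi.single l 1 : Fin m → ℚ) := by
        ext l'
        rw [Finset.sum_apply]
        simp [Pi.single_apply]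
      rw [← hψ]
      simp only [LinearMap.dualMap_apply, LinearMap.sum_apply, LinearMap.smul_apply,
        LinearMap.coe_comp, Function.comp_apply, Submodule.coe_subtype, smul_eq_mul]
      conv_lhs => rw [hv]
      rw [map_sum]
      congr 1
      ext l
      rw [map_smul]
      simp [f, LinearMap.proj, smul_eq_mul, mul_comm]
    rw [key]
    exact Submodule.sum_mem _ fun l _ =>
      Submodule.smul_mem _ _ (Submodule.subset_span ⟨l, rfl⟩)
  obtain ⟨b', hb'sub, hb'span, hb'ind⟩ := exists_linearIndependent ℚ (Set.range f)
  rw [hfspan] at hb'span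
  have hfin : b'.Finite := (Set.finite_range f).subset hb'sub
  haveI := hfin.fintype
  have hbasis : Module.Basis b' ℚ (Module.Dual ℚ L) :=
    Module.Basis.mk hb'ind (by rw [Subtype.range_coe, hb'span])
  have hcard : Fintype.card b' = r := by
    have h1 : Module.finrank ℚ (Module.Dual ℚ L) = Fintype.card b' :=
      Module.finrank_eq_card_basis hbasis
    have h2 : Module.finrank ℚ (Module.Dual ℚ L) = Module.finrank ℚ L :=
      Subspace.dual_finrank_eq
    have h3 : Module.finrank ℚ L = r := by
      rw [hL, finrank_span_eq_card hG, Fintype.card_fin]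
    omega
  let e : Fin r ≃ b' := (Fintype.equivFinOfCardEq hcard).symm
  have hmem : ∀ y : b', ∃ l, f l = (y : Module.Dual ℚ L) := fun y => hb'sub y.2
  choose τ0 hτ0 using hmem
  refine ⟨fun s => τ0 (e s), ?_, ?_⟩
  · intro s s' hss
    have hss' : τ0 (e s) = τ0 (e s') := hss
    have h1 : f (τ0 (e s)) = f (τ0 (e s')) := by rw [hss']
    rw [hτ0, hτ0] at h1
    exact e.injective (Subtype.coe_injective h1)
  · intro hdet
    obtain ⟨a, ha0, haA⟩ := Matrix.exists_vecMul_eq_zero_iff.mpr hdet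
    have hGL : ∀ k, G k ∈ L := fun k => Submodule.subset_span ⟨k, rfl⟩
    set yL : L := ∑ k, a k • (⟨G k, hGL k⟩ : L) with hyL
    have hyval : (yL : Fin m → ℚ) = ∑ k, a k • G k := by
      rw [hyL]
      push_cast
      rfl
    have hvanish : ∀ s : Fin r, (yL : Fin m → ℚ) (τ0 (e s)) = 0 := by
      intro s
      have := congrFun haA s
      simp only [Matrix.vecMul, dotProduct, Matrix.of_apply, Pi.zero_apply] at this
      rw [hyval]
      simpa [Finset.sum_apply, smul_eq_mul] using this
    have hev : ∀ φ : Module.Dual ℚ L, φ yL = 0 := by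
      intro φ
      have hφ : φ ∈ Submodule.span ℚ b' := by rw [hb'span]; trivial
      have hle : Submodule.span ℚ b' ≤
          LinearMap.ker ((Module.Dual.eval ℚ L) yL) := by
        rw [Submodule.span_le]
        intro y' hy'
        rw [SetLike.mem_coe, LinearMap.mem_ker]
        have hy'' : y' = ((⟨y', hy'⟩ : b') : Module.Dual ℚ L) := rfl
        have : (⟨y', hy'⟩ : b') = e (e.symm ⟨y', hy'⟩) := by simp
        rw [hy'', this, ← hτ0 (e (e.symm ⟨y', hy'⟩))]
        simp only [Module.Dual.eval_apply, f, LinearMap.coe_comp, Function.comp_apply,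
          Submodule.coe_subtype, LinearMap.proj_apply]
        exact hvanish (e.symm ⟨y', hy'⟩)
      have := hle hφ
      rw [LinearMap.mem_ker] at this
      simpa using this
    have hy0 : yL = 0 := (Module.forall_dual_apply_eq_zero_iff ℚ yL).mp hev
    have h0 : ∑ k, a k • G k = 0 := by
      rw [← hyval, hy0]; rfl
    have := linearIndependent_iff'.mp hG Finset.univ a (by simpa using h0)
    exact ha0 (funext fun k => this k (Finset.mem_univ k))

/-- No small span of balanced ±1 vectors containing the all-ones vector,
large prime characteristic case. Let `p ≥ 2n²` be a prime and `F` a field of characteristic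
`p`. If the all-ones vector is an `F`-linear combination of `t` vectors in `{-1,1}^n` each
with coordinate sum at most `n/s` in absolute value, then `(t+1)! ≥ s`. -/
theorem stmt3 (n s t : ℕ) (hn : 1 ≤ n) (hs : 1 ≤ s) (ht : 1 ≤ t) (hsn : s ≤ n)
    (p : ℕ) (hp : p.Prime) (hpn : 2 * n ^ 2 ≤ p)
    (F : Type*) [Field F] [CharP F p]
    (x : Fin t → Fin n → ℤ)
    (hx : ∀ i j, x i j = 1 ∨ x i j = -1)
    (hbal : ∀ i, |((∑ j, x i j : ℤ) : ℚ)| ≤ (n : ℚ) / (s : ℚ))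
    (c : Fin t → F)
    (hspan : ∀ j, (1 : F) = ∑ i, c i * ((x i j : ℤ) : F)) :
    s ≤ (t + 1).factorial := by
  classical
  by_contra hcon
  push_neg at hcon
  -- basic setup
  set zInt : Fin n → Fin (t+1) → ℤ := fun j => Fin.cons 1 (fun i => x i j) with hzInt
  have hzbound : ∀ j l, |zInt j l| ≤ 1 := by
    intro j l
    refine Fin.cases ?_ ?_ l
    · simp [hzInt]
    · intro i
      rcases hx i j with h | h <;> simp [hzInt, h]
  have hz0 : ∀ j, zInt j 0 = 1 := fun j => rfl
  set zQ : Fin n → Fin (t+1) → ℚ := fun j l => ((zInt j l : ℤ) : ℚ) with hzQ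
  set c' : Fin (t+1) → F := Fin.cons (-1) c with hc'
  have hF : ∀ j, ∑ l, c' l * ((zInt j l : ℤ) : F) = 0 := by
    intro j
    rw [Fin.sum_univ_succ]
    simp only [hc', hzInt, Fin.cons_zero, Fin.cons_succ]
    rw [← hspan j]
    ring
  -- choose a linearly independent spanning subfamily
  obtain ⟨b, hbsub, hbspan, hbind⟩ := exists_linearIndependent ℚ (Set.range zQ)
  have hfinb : b.Finite := (Set.finite_range zQ).subset hbsub
  haveI := hfinb.fintype
  set r := Fintype.card b with hr
  set eb : b ≃ Fin r := Fintype.equivFin b with heb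
  set G : Fin r → (Fin (t+1) → ℚ) := fun k => ((eb.symm k : b) : Fin (t+1) → ℚ) with hG
  have hGind : LinearIndependent ℚ G := hbind.comp eb.symm eb.symm.injective
  have hbz : ∀ k, ∃ j, zQ j = G k := fun k => hbsub (eb.symm k).2
  choose jdx hjdx using hbz
  set Gz : Fin r → Fin (t+1) → ℤ := fun k => zInt (jdx k) with hGzdef
  have hGz : ∀ k l, ((Gz k l : ℤ) : ℚ) = G k l := by
    intro k l
    rw [← hjdx k]
  -- invertible minor
  obtain ⟨τ, hτinj, hτdet⟩ := exists_invertible_minor G hGind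
  set Bz : Matrix (Fin r) (Fin r) ℤ := Matrix.of (fun k s' => Gz k (τ s')) with hBz
  have hBcast : (Matrix.of fun k s' => G k (τ s')) = Bz.map (Int.cast : ℤ → ℚ) := by
    ext k s'
    simp [hBz, hGz]
  have hdetcast : ((Bz.det : ℤ) : ℚ) = (Matrix.of fun k s' => G k (τ s')).det := by
    rw [hBcast]
    exact (RingHom.map_det (Int.castRingHom ℚ) Bz)
  have hdetne : Bz.det ≠ 0 := by
    intro h
    apply hτdet
    rw [← hdetcast, h, Int.cast_zero]
  have hdetbound : |Bz.det| ≤ (r.factorial : ℤ) := by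
    apply abs_det_le_factorial
    intro i j
    exact hzbound _ _
  have hrle : r ≤ t + 1 := by
    simpa using Fintype.card_le_of_injective τ hτinj
  -- the main finisher for cases A and B1
  have keyA : ∀ i₀ : Fin (t+1), (∀ s', τ s' ≠ i₀) →
      ((if (0 : Fin (t+1)) = i₀ then Bz.det else 0)
        - ∑ s', (if τ s' = 0 then Bz.cramer (fun k => Gz k i₀) s' else 0)) ≠ 0 → False := by
    intro i₀ hi₀ hα0
    set v : Fin r → ℤ := fun k => Gz k i₀ with hv
    set β : Fin r → ℤ := Bz.cramer v with hβ
    set α : Fin (t+1) → ℤ := fun l =>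
      (if l = i₀ then Bz.det else 0) - ∑ s', (if τ s' = l then β s' else 0) with hα
    have hα0' : α 0 ≠ 0 := hα0
    have horthz : ∀ k, ∑ l, α l * Gz k l = 0 := by
      intro k
      have hcram := congrFun (Matrix.mulVec_cramer Bz v) k
      simp only [Matrix.mulVec, dotProduct, Pi.smul_apply, smul_eq_mul] at hcram
      calc ∑ l, α l * Gz k l
          = ∑ l, ((if l = i₀ then Bz.det * Gz k l else 0)
              - ∑ s', (if τ s' = l then β s' * Gz k l else 0)) := by
            apply Finset.sum_congr rfl
            intro l _
            rw [hα, sub_mul, Finset.sum_mul]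
            congr 1
            · split <;> simp
            · apply Finset.sum_congr rfl
              intro s' _
              split <;> simp
        _ = Bz.det * Gz k i₀ - ∑ s', β s' * Gz k (τ s') := by
            rw [Finset.sum_sub_distrib]
            congr 1
            · simp
            · rw [Finset.sum_comm]
              apply Finset.sum_congr rfl
              intro s' _
              simp
        _ = 0 := by
            have hh : ∑ s', β s' * Gz k (τ s') = Bz.det * Gz k i₀ := by
              rw [← hcram]
              apply Finset.sum_congr rfl
              intro s' _
              rw [mul_comm]
              rfl
            rw [hh, sub_self]
    set ℓ : (Fin (t+1) → ℚ) →ₗ[ℚ] ℚ := ∑ l, (α l : ℚ) • LinearMap.proj l with hℓ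
    have hℓapply : ∀ y : Fin (t+1) → ℚ, ℓ y = ∑ l, (α l : ℚ) * y l := by
      intro y
      rw [hℓ]
      simp [LinearMap.proj_apply]
    have hkerG : ∀ k, ℓ (G k) = 0 := by
      intro k
      rw [hℓapply]
      have hcast : ∑ l, (α l : ℚ) * G k l = ((∑ l, α l * Gz k l : ℤ) : ℚ) := by
        push_cast
        apply Finset.sum_congr rfl
        intro l _
        rw [hGz]
      rw [hcast, horthz k, Int.cast_zero]
    have hker : ∀ j, ℓ (zQ j) = 0 := by
      intro j
      have hj : zQ j ∈ Submodule.span ℚ b := by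
        rw [hbspan]; exact Submodule.subset_span ⟨j, rfl⟩
      have hle : Submodule.span ℚ b ≤ LinearMap.ker ℓ := by
        rw [Submodule.span_le]
        intro y hy
        rw [SetLike.mem_coe, LinearMap.mem_ker]
        have hyG : y = G (eb ⟨y, hy⟩) := by rw [hG]; simp
        rw [hyG]
        exact hkerG _
      exact LinearMap.mem_ker.mp (hle hj)
    have hsumj : (α 0 : ℚ) * (n : ℚ)
        + ∑ i : Fin t, (α i.succ : ℚ) * ((∑ j, x i j : ℤ) : ℚ) = 0 := by
      have h1 : ∑ j, ∑ l, (α l : ℚ) * zQ j l = 0 := by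
        rw [← Finset.sum_eq_zero (fun j (_ : j ∈ Finset.univ) => hker j)]
        apply Finset.sum_congr rfl
        intro j _
        rw [hℓapply]
      have h2 : ∑ l, (α l : ℚ) * (∑ j, zQ j l) = 0 := by
        rw [← h1, Finset.sum_comm]
        apply Finset.sum_congr rfl
        intro j _
        rw [Finset.mul_sum]
      rw [Fin.sum_univ_succ] at h2
      have hz0' : ∑ j, zQ j 0 = (n : ℚ) := by
        have : ∀ j : Fin n, zQ j 0 = 1 := by
          intro j
          rw [hzQ]
          simp [hz0 j]
        rw [Finset.sum_congr rfl (fun j _ => this j)]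
        simp
      have hzi : ∀ i : Fin t, ∑ j, zQ j i.succ = ((∑ j, x i j : ℤ) : ℚ) := by
        intro i
        push_cast
        apply Finset.sum_congr rfl
        intro j _
        rw [hzQ]
        simp [hzInt]
      rw [hz0'] at h2
      rw [Finset.sum_congr rfl (fun i (_ : i ∈ Finset.univ) => by rw [hzi i])] at h2
      exact h2
    have hβbound : ∀ s', |β s'| ≤ (r.factorial : ℤ) := by
      intro s'
      rw [hβ, Matrix.cramer_apply]
      apply abs_det_le_factorial
      intro k s''
      rw [Matrix.updateCol_apply]
      split
      · exact hzbound _ _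
      · exact hzbound _ _
    have hrt : r ≤ t := by
      have h1 : (Finset.univ.image τ).card = r := by
        rw [Finset.card_image_of_injective _ hτinj, Finset.card_univ, Fintype.card_fin]
      have h2 : Finset.univ.image τ ⊆ Finset.univ.erase i₀ := by
        intro l hl
        rw [Finset.mem_erase]
        obtain ⟨s', _, rfl⟩ := Finset.mem_image.mp hl
        exact ⟨hi₀ s', Finset.mem_univ _⟩
      have h3 := Finset.card_le_card h2
      rw [h1, Finset.card_erase_of_mem (Finset.mem_univ _), Finset.card_univ,
        Fintype.card_fin] at h3
      omega
    have htail : ∑ i : Fin t, |α i.succ| ≤ ((t+1).factorial : ℤ) := by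
      have h1 : ∀ i : Fin t, |α i.succ| ≤ (if i.succ = i₀ then |Bz.det| else 0)
          + ∑ s', (if τ s' = i.succ then |β s'| else 0) := by
        intro i
        rw [hα]
        refine (abs_sub _ _).trans (add_le_add ?_ ?_)
        · split <;> simp
        · refine (Finset.abs_sum_le_sum_abs _ _).trans (le_of_eq ?_)
          apply Finset.sum_congr rfl
          intro s' _
          split <;> simp
      calc ∑ i : Fin t, |α i.succ|
          ≤ ∑ i : Fin t, ((if i.succ = i₀ then |Bz.det| else 0)
              + ∑ s', (if τ s' = i.succ then |β s'| else 0)) :=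
            Finset.sum_le_sum fun i _ => h1 i
        _ = (∑ i : Fin t, if i.succ = i₀ then |Bz.det| else 0)
              + ∑ i : Fin t, ∑ s', (if τ s' = i.succ then |β s'| else 0) :=
            Finset.sum_add_distrib
        _ ≤ |Bz.det| + ∑ s' : Fin r, |β s'| := by
            refine add_le_add ?_ ?_
            · by_cases hex : ∃ i : Fin t, i.succ = i₀
              · obtain ⟨i', hi'⟩ := hex
                rw [Finset.sum_eq_single i']
                · rw [if_pos hi']
                · intro i _ hne
                  rw [if_neg]
                  intro hcontra
                  exact hne (Fin.succ_injective _ (hcontra.trans hi'.symm))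
                · intro hcontra
                  exact absurd (Finset.mem_univ i') hcontra
              · push_neg at hex
                rw [Finset.sum_eq_zero (fun i _ => if_neg (hex i))]
                positivity
            · rw [Finset.sum_comm]
              apply Finset.sum_le_sum
              intro s' _
              by_cases hex : ∃ i : Fin t, τ s' = i.succ
              · obtain ⟨i', hi'⟩ := hex
                rw [Finset.sum_eq_single i']
                · rw [if_pos hi']
                · intro i _ hne
                  rw [if_neg]
                  intro hcontra
                  exact hne (Fin.succ_injective _ (hcontra.symm.trans hi'))
                · intro hcontra
                  exact absurd (Finset.mem_univ i') hcontra
              · push_neg at hex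
                rw [Finset.sum_eq_zero (fun i _ => if_neg (hex i))]
                positivity
        _ ≤ (r.factorial : ℤ) + (r : ℤ) * (r.factorial : ℤ) := by
            refine add_le_add hdetbound ?_
            calc ∑ s' : Fin r, |β s'| ≤ ∑ _s' : Fin r, (r.factorial : ℤ) :=
                  Finset.sum_le_sum fun s' _ => hβbound s'
              _ = (r : ℤ) * (r.factorial : ℤ) := by
                  rw [Finset.sum_const, Finset.card_univ, Fintype.card_fin]
                  simp [mul_comm]
        _ = (((r+1).factorial : ℕ) : ℤ) := by
            rw [Nat.factorial_succ]
            push_cast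
            ring
        _ ≤ ((t+1).factorial : ℤ) := by
            have := Nat.factorial_le (show r + 1 ≤ t + 1 by omega)
            exact_mod_cast this
    have hα0abs : (1 : ℚ) ≤ |(α 0 : ℚ)| := by
      have h := Int.one_le_abs hα0'
      exact_mod_cast h
    have hnpos : (0:ℚ) < (n:ℚ) := by exact_mod_cast Nat.lt_of_lt_of_le Nat.zero_lt_one hn
    have hspos : (0:ℚ) < (s:ℚ) := by exact_mod_cast Nat.lt_of_lt_of_le Nat.zero_lt_one hs
    set T : ℚ := ∑ i : Fin t, |(α i.succ : ℚ)| with hT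
    have hTbound : T ≤ (((t+1).factorial : ℕ) : ℚ) := by
      have h2 : T = ((∑ i : Fin t, |α i.succ| : ℤ) : ℚ) := by
        rw [hT]
        push_cast
        rfl
      rw [h2]
      exact_mod_cast htail
    have hstep : (n:ℚ) ≤ T * ((n:ℚ)/(s:ℚ)) := by
      calc (n:ℚ) = 1 * (n:ℚ) := (one_mul _).symm
        _ ≤ |(α 0 : ℚ)| * (n:ℚ) := mul_le_mul_of_nonneg_right hα0abs (le_of_lt hnpos)
        _ = |(α 0 : ℚ) * (n:ℚ)| := by
            rw [abs_mul, abs_of_pos hnpos]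
        _ = |∑ i : Fin t, (α i.succ : ℚ) * ((∑ j, x i j : ℤ) : ℚ)| := by
            rw [eq_neg_of_add_eq_zero_left hsumj, abs_neg]
        _ ≤ ∑ i : Fin t, |(α i.succ : ℚ) * ((∑ j, x i j : ℤ) : ℚ)| :=
            Finset.abs_sum_le_sum_abs _ _
        _ ≤ ∑ i : Fin t, |(α i.succ : ℚ)| * ((n:ℚ)/(s:ℚ)) := by
            apply Finset.sum_le_sum
            intro i _
            rw [abs_mul]
            exact mul_le_mul_of_nonneg_left (hbal i) (abs_nonneg _)
        _ = T * ((n:ℚ)/(s:ℚ)) := by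
            rw [hT, Finset.sum_mul]
    have hsT : (s:ℚ) ≤ T := by
      have h1 : (n:ℚ) * (s:ℚ) ≤ T * (n:ℚ) := by
        have h2 := mul_le_mul_of_nonneg_right hstep (le_of_lt hspos)
        rwa [mul_assoc, div_mul_cancel₀ _ (ne_of_gt hspos)] at h2
      nlinarith
    have hfinal : (s:ℚ) ≤ (((t+1).factorial : ℕ) : ℚ) := hsT.trans hTbound
    have : s ≤ (t+1).factorial := by exact_mod_cast hfinal
    omega

  by_cases h0 : ∃ s0 : Fin r, τ s0 = 0
  · obtain ⟨s0, hs0⟩ := h0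
    by_cases hB1 : ∃ i₀ : Fin (t+1), (∀ s', τ s' ≠ i₀) ∧
        Bz.cramer (fun k => Gz k i₀) s0 ≠ 0
    · obtain ⟨i₀, hi₀, hcr⟩ := hB1
      apply keyA i₀ hi₀
      have h0i : (0 : Fin (t+1)) ≠ i₀ := fun h => hi₀ s0 (hs0.trans h)
      rw [if_neg h0i]
      have hsum : ∑ s', (if τ s' = 0 then Bz.cramer (fun k => Gz k i₀) s' else 0)
          = Bz.cramer (fun k => Gz k i₀) s0 := by
        rw [Finset.sum_eq_single s0]
        · rw [if_pos hs0]
        · intro s' _ hne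
          rw [if_neg]
          intro h
          exact hne (hτinj (h.trans hs0.symm))
        · intro h
          exact absurd (Finset.mem_univ s0) h
      rw [hsum, zero_sub, neg_ne_zero]
      exact hcr
    · -- case B2
      push_neg at hB1
      set u : Fin r → ℤ := fun k => Bz.adjugate s0 k with hu
      have hukey : ∀ l : Fin (t+1), ∑ k, u k * Gz k l
          = Bz.det * (if l = 0 then 1 else 0) := by
        intro l
        by_cases hl : ∃ s', τ s' = l
        · obtain ⟨s', rfl⟩ := hl
          have h1 : ∑ k, u k * Gz k (τ s') = (Bz.adjugate * Bz) s0 s' := by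
            rw [Matrix.mul_apply]
            rfl
          rw [h1, Matrix.adjugate_mul]
          simp only [Matrix.smul_apply, Matrix.one_apply, smul_eq_mul]
          have hiff : (s0 = s') ↔ (τ s' = 0) :=
            ⟨fun h => by rw [← h, hs0], fun h => hτinj (hs0.trans h.symm)⟩
          congr 1
          exact if_congr hiff rfl rfl
        · push_neg at hl
          have h2 := hB1 l hl
          have h1 : ∑ k, u k * Gz k l = ((Bz.adjugate).mulVec (fun k => Gz k l)) s0 := by
            simp [Matrix.mulVec, dotProduct, hu]
          rw [h1, ← Matrix.cramer_eq_adjugate_mulVec, h2]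
          have hl0 : l ≠ 0 := fun h => hl s0 (by rw [hs0, h])
          rw [if_neg hl0, mul_zero]
      have hGzF : ∀ k, ∑ l, c' l * ((Gz k l : ℤ) : F) = 0 := fun k => hF (jdx k)
      have hDF : ((Bz.det : ℤ) : F) = 0 := by
        have e1 : ∑ l, c' l * (((∑ k, u k * Gz k l : ℤ)) : F)
            = -((Bz.det : ℤ) : F) := by
          have hterm : ∀ l : Fin (t+1), c' l * (((∑ k, u k * Gz k l : ℤ)) : F)
              = c' l * ((Bz.det : ℤ) : F) * (if l = 0 then 1 else 0) := by
            intro l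
            rw [hukey l]
            push_cast
            split <;> ring
          rw [Finset.sum_congr rfl (fun l _ => hterm l), Fin.sum_univ_succ]
          have hsucc : ∀ i : Fin t, c' i.succ * ((Bz.det:ℤ):F)
              * (if (Fin.succ i) = 0 then (1:F) else 0) = 0 := by
            intro i
            rw [if_neg (Fin.succ_ne_zero i)]
            ring
          rw [Finset.sum_eq_zero (fun i _ => hsucc i), add_zero, if_pos rfl]
          rw [hc']
          simp [Fin.cons_zero]
        have e2 : ∑ l, c' l * (((∑ k, u k * Gz k l : ℤ)) : F) = 0 := by
          have swap : ∑ l, c' l * (((∑ k, u k * Gz k l : ℤ)) : F)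
              = ∑ k, ((u k : ℤ) : F) * (∑ l, c' l * ((Gz k l : ℤ) : F)) := by
            calc ∑ l, c' l * (((∑ k, u k * Gz k l : ℤ)) : F)
                = ∑ l, ∑ k, c' l * (((u k : ℤ) : F) * ((Gz k l : ℤ) : F)) := by
                  apply Finset.sum_congr rfl
                  intro l _
                  push_cast
                  rw [Finset.mul_sum]
              _ = ∑ k, ∑ l, c' l * (((u k : ℤ) : F) * ((Gz k l : ℤ) : F)) :=
                  Finset.sum_comm
              _ = ∑ k, ((u k : ℤ) : F) * (∑ l, c' l * ((Gz k l : ℤ) : F)) := by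
                  apply Finset.sum_congr rfl
                  intro k _
                  rw [Finset.mul_sum]
                  apply Finset.sum_congr rfl
                  intro l _
                  ring
          rw [swap]
          apply Finset.sum_eq_zero
          intro k _
          rw [hGzF k, mul_zero]
        rw [e2] at e1
        exact neg_eq_zero.mp e1.symm
      have hdvd : (p:ℤ) ∣ Bz.det := by
        exact_mod_cast (CharP.intCast_eq_zero_iff F p _).mp hDF
      have hple : (p:ℤ) ≤ |Bz.det| :=
        Int.le_of_dvd (abs_pos.mpr hdetne) ((dvd_abs _ _).mpr hdvd)
      have h1 : ((r.factorial:ℕ):ℤ) ≤ (((t+1).factorial:ℕ):ℤ) := by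
        exact_mod_cast Nat.factorial_le hrle
      have h2 : (p:ℤ) ≤ (((t+1).factorial:ℕ):ℤ) := le_trans hple (le_trans hdetbound h1)
      have h3 : p ≤ (t+1).factorial := by exact_mod_cast h2
      have h4 : n < p := by
        have h5 : n ≤ n^2 := Nat.le_self_pow (by norm_num) n
        omega
      omega

  · -- case A
    push_neg at h0
    apply keyA 0 h0
    rw [if_pos rfl]
    have hsum : ∑ s', (if τ s' = 0 then Bz.cramer (fun k => Gz k 0) s' else 0) = 0 :=
      Finset.sum_eq_zero fun s' _ => if_neg (h0 s')
    rw [hsum, sub_zero]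
    exact hdetne
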